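/- Let R > 0, 0 < a < b, Q₀ > 0, Q₁ > 0 and w ∈ ℝ, and define ζ(u) = (R/u)(1 − bu)/(1 − au) for u ∈ ℂ \ {0, 1/a}. Then the function u ↦ ζ(u)·[ζ(1/u)/(1 + ζ(u)ζ(1/u)) − (Q₁/(1 + Q₀ + Q₁))·1/(ζ(u) − w)] tends, as u → 0 with u ≠ 0, to (R²b/a)/(1 + R²b/a) − Q₁/(1 + Q₀ + Q₁). Moreover, this limiting value equals 1/(1 + Q₀ + Q₁) if and only if R²b/a = (1 + Q₁)/Q₀. -/

import Mathlib

theorem stmt_9 (R a b Q₀ Q₁ w : ℝ) (hR : R > 0) (ha : 0 < a) (hab : a < b)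
    (hQ₀ : Q₀ > 0) (hQ₁ : Q₁ > 0)
    (ζ : ℂ → ℂ)
    (hζ : ∀ u : ℂ, u ≠ 0 → u ≠ 1 / (a : ℂ) →
      ζ u = ((R : ℂ) / u) * (1 - (b : ℂ) * u) / (1 - (a : ℂ) * u)) :
    Filter.Tendsto
      (fun u : ℂ => ζ u *
        (ζ (1 / u) / (1 + ζ u * ζ (1 / u)) -
          ((Q₁ / (1 + Q₀ + Q₁) : ℝ) : ℂ) * (1 / (ζ u - (w : ℂ)))))
      (nhdsWithin 0 {(0 : ℂ)}ᶜ)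
      (nhds (((R ^ 2 * b / a) / (1 + R ^ 2 * b / a) - Q₁ / (1 + Q₀ + Q₁) : ℝ) : ℂ)) ∧
    ((R ^ 2 * b / a) / (1 + R ^ 2 * b / a) - Q₁ / (1 + Q₀ + Q₁) = 1 / (1 + Q₀ + Q₁) ↔
      R ^ 2 * b / a = (1 + Q₁) / Q₀) := by
  have hb : 0 < b := ha.trans hab
  have haC : (a : ℂ) ≠ 0 := by exact_mod_cast ha.ne'
  have hRC : (R : ℂ) ≠ 0 := by exact_mod_cast hR.ne'
  have hS : (0:ℝ) < 1 + Q₀ + Q₁ := by linarith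
  have haRb : (0:ℝ) < a + R^2*b := by positivity
  have h1K : (0:ℝ) < 1 + R^2*b/a := by positivity
  set c : ℝ := Q₁ / (1 + Q₀ + Q₁) with hc
  set g : ℂ → ℂ := fun u =>
    (R:ℂ)^2*(1 - b*u)*(u - b) / ((1 - a*u)*(u - a) + R^2*(1 - b*u)*(u - b))
      - (c:ℂ) * ((R:ℂ)*(1 - b*u) / (R*(1 - b*u) - w*u*(1 - a*u))) with hgdef
  have hXC : ((a:ℂ) + (R:ℂ)^2*(b:ℂ)) ≠ 0 := by
    have e : ((a:ℂ) + (R:ℂ)^2*(b:ℂ)) = (((a + R^2*b : ℝ)) : ℂ) := by push_cast; ring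
    rw [e]
    exact_mod_cast haRb.ne'
  have hD₁0ne : ((1:ℂ) - a*0)*(0 - a) + R^2*(1 - b*0)*(0 - b) ≠ 0 := by
    intro h
    apply hXC
    linear_combination -h
  have hD₂0ne : (R:ℂ)*(1 - b*0) - w*0*(1 - a*0) ≠ 0 := by
    simpa using hRC
  have hcontg : ContinuousAt g 0 := by
    apply ContinuousAt.sub
    · exact ContinuousAt.div (by fun_prop) (by fun_prop) hD₁0ne
    · exact ContinuousAt.mul (by fun_prop)
        (ContinuousAt.div (by fun_prop) (by fun_prop) hD₂0ne)
  have hg0 : g 0 = (((R ^ 2 * b / a) / (1 + R ^ 2 * b / a) - c : ℝ) : ℂ) := by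
    have h1 : (R ^ 2 * b / a) / (1 + R ^ 2 * b / a) = R^2*b/(a + R^2*b) := by
      rw [div_eq_div_iff h1K.ne' haRb.ne']
      field_simp
    rw [hgdef]
    simp only [h1]
    push_cast
    have eA : (R:ℂ)^2*(1 - b*0)*(0 - b) / ((1 - a*0)*(0 - a) + R^2*(1 - b*0)*(0 - b))
        = (R:ℂ)^2*b/((a:ℂ) + R^2*b) := by
      rw [div_eq_div_iff hD₁0ne hXC]; ring
    have eB : (R:ℂ)*(1 - b*0) / ((R:ℂ)*(1 - b*0) - w*0*(1 - a*0)) = 1 := by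
      rw [div_eq_one_iff_eq hD₂0ne]; ring
    rw [eA, eB, mul_one]
  have hgt : Filter.Tendsto g (nhdsWithin 0 {(0:ℂ)}ᶜ)
      (nhds (((R ^ 2 * b / a) / (1 + R ^ 2 * b / a) - c : ℝ) : ℂ)) := by
    rw [← hg0]
    exact hcontg.continuousWithinAt.tendsto
  constructor
  · apply Filter.Tendsto.congr' _ hgt
    have hcont1 : Filter.Tendsto (fun u : ℂ => (1 - a*u)*(u - a) + R^2*(1 - b*u)*(u - b))
        (nhdsWithin 0 {(0:ℂ)}ᶜ) (nhds (((1:ℂ) - a*0)*(0 - a) + R^2*(1 - b*0)*(0 - b))) :=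
      (Continuous.continuousAt (by fun_prop)).continuousWithinAt.tendsto
    have hcont2 : Filter.Tendsto (fun u : ℂ => (R:ℂ)*(1 - b*u) - w*u*(1 - a*u))
        (nhdsWithin 0 {(0:ℂ)}ᶜ) (nhds ((R:ℂ)*(1 - b*0) - w*0*(1 - a*0))) :=
      (Continuous.continuousAt (by fun_prop)).continuousWithinAt.tendsto
    have hcont3 : Filter.Tendsto (fun u : ℂ => (1:ℂ) - a*u)
        (nhdsWithin 0 {(0:ℂ)}ᶜ) (nhds ((1:ℂ) - a*0)) :=
      (Continuous.continuousAt (by fun_prop)).continuousWithinAt.tendsto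
    have hcont4 : Filter.Tendsto (fun u : ℂ => u - (a:ℂ))
        (nhdsWithin 0 {(0:ℂ)}ᶜ) (nhds ((0:ℂ) - a)) :=
      (Continuous.continuousAt (by fun_prop)).continuousWithinAt.tendsto
    have h1 := hcont1.eventually_ne hD₁0ne
    have h2 := hcont2.eventually_ne hD₂0ne
    have h3 := hcont3.eventually_ne (show (1:ℂ) - a*0 ≠ 0 by norm_num)
    have h4 := hcont4.eventually_ne (show (0:ℂ) - a ≠ 0 by rw [zero_sub]; exact neg_ne_zero.mpr haC)
    have h5 : ∀ᶠ u in nhdsWithin 0 {(0:ℂ)}ᶜ, u ≠ 0 := eventually_mem_nhdsWithin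
    filter_upwards [h1, h2, h3, h4, h5] with u hu1 hu2 hu3 hu4 hu5
    have hua : u ≠ (a:ℂ) := sub_ne_zero.mp hu4
    have hu3' : (1:ℂ) - u*a ≠ 0 := by rwa [mul_comm]
    have huinv : u ≠ 1/(a:ℂ) := by
      intro h
      apply hu3
      rw [h, mul_one_div_cancel haC, sub_self]
    have hζu := hζ u hu5 huinv
    have hζiv : ζ (1/u) = (R:ℂ) * u * (u - b) / (u - a) := by
      rw [hζ (1/u) (one_div_ne_zero hu5) (by
        intro h
        apply hua
        have h2 := congrArg (fun z : ℂ => z⁻¹) h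
        simpa [one_div] using h2)]
      rw [div_eq_div_iff _ hu4]
      · field_simp
      · intro h
        apply hu4
        have e : (1:ℂ) - a * (1/u) = (u - a)/u := by field_simp
        rw [e] at h
        exact (div_eq_zero_iff.mp h).resolve_right hu5
    have hPd : (1:ℂ) + ζ u * ζ (1/u)
        = ((1 - a*u)*(u - a) + R^2*(1 - b*u)*(u - b)) / ((1 - a*u)*(u - a)) := by
      rw [hζu, hζiv]
      field_simp [hu3']
    have hW : ζ u - (w:ℂ)
        = ((R:ℂ)*(1 - b*u) - w*u*(1 - a*u)) / (u * (1 - a*u)) := by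
      rw [hζu]
      field_simp [hu3']
    have key : ζ u * (ζ (1/u) / (1 + ζ u * ζ (1/u)) - (c:ℂ) * (1/(ζ u - w))) = g u := by
      rw [hPd, hW, one_div_div, hζiv, hζu, hgdef]
      field_simp [hu3']
    exact key.symm
  · rw [sub_eq_iff_eq_add, ← add_div, div_eq_div_iff h1K.ne' hS.ne',
      eq_div_iff hQ₀.ne']
    constructor <;> intro h <;> nlinarith [h]
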